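/- Let g : ℝ^p → [0,∞) be differentiable and h : ℝ^p → [0,∞) subdifferentiable. Let x ∈ ℝ^p and r > 0 with g r-CL at x (4g(x) < r²χ(g,x,r)), let ε ∈ (0,1) and set r' := εr. Assume there is y ∈ B̄(x, r') with g(y) ≠ 0, and define g̲ := inf{g(y) : y ∈ B̄(x, r'), g(y) ≠ 0}, ḡ := sup_{y ∈ B̄(x,r')} g(y), h̄ := sup_{y ∈ B̄(x,r')} h(y), L := sup{‖z‖₂ : z ∈ ∂h(y), y ∈ B̄(x,r)}; assume ḡ, h̄, L are finite with L > 0 and h(x) > 0 (so h̄ > 0). Set A := 4g(x)·ḡ, B := 4g(x)·h̄ + 4h(x)·ḡ, Cc := 4h(x)·h̄, D := (1/2)·r'²·χ(g,x,r)·g̲, and Δ := B² − 4Cc(A − D). Then Δ ≥ 0, and for every β with 0 < β < min{ √(g̲·χ(g,x,r))/(4L), (√Δ − B)/(2Cc) }, the function f := g + βh satisfies 4f(x) < r'²·χ(f, x, r', g), where χ(f, x, r', g) := inf{ (inf_{z ∈ ∂h(y)} ‖∇g(y) + βz‖₂²)/f(y) : y ∈ B̄(x, r'), g(y) ≠ 0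 }. If in addition f(y) = 0 whenever g(y) = 0 for y ∈ B̄(x, r'), then f is r'-CL at x: 4f(x) < r'²·χ(f, x, r'). -/

import Mathlib

open Metric

/-- `z` is a subgradient of `h` at `x`. -/
def IsSubgradientAt {p : ℕ} (h : EuclideanSpace ℝ (Fin p) → ℝ)
    (z x : EuclideanSpace ℝ (Fin p)) : Prop :=
  ∀ y, h x + (inner ℝ z (y - x) : ℝ) ≤ h y

/-- The Chatterjee–Łojasiewicz constant of a differentiable function `g` (with gradient `G`)
at `x₀` with radius `r`. -/
noncomputable def chiCL {p : ℕ} (g : EuclideanSpace ℝ (Fin p) → ℝ)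
    (G : EuclideanSpace ℝ (Fin p) → EuclideanSpace ℝ (Fin p))
    (x₀ : EuclideanSpace ℝ (Fin p)) (r : ℝ) : ℝ :=
  sInf {s | ∃ y ∈ Metric.closedBall x₀ r, g y ≠ 0 ∧ s = ‖G y‖ ^ 2 / g y}

/-- The Chatterjee–Łojasiewicz constant of `f = g + βh` at `x` with radius `r'`, where the
subgradients of `f` are the vectors `∇g(y) + βz` with `z ∈ ∂h(y)`; the infimum ranges over
the points of the ball where `q` does not vanish (`q = g` gives `χ(f,x,r',g)`, while
`q = f` gives `χ(f,x,r')`). -/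
noncomputable def chiReg {p : ℕ} (g h : EuclideanSpace ℝ (Fin p) → ℝ)
    (G : EuclideanSpace ℝ (Fin p) → EuclideanSpace ℝ (Fin p)) (β : ℝ)
    (q : EuclideanSpace ℝ (Fin p) → ℝ)
    (x : EuclideanSpace ℝ (Fin p)) (r' : ℝ) : ℝ :=
  sInf {s | ∃ y ∈ Metric.closedBall x r', q y ≠ 0 ∧
    s = sInf {t | ∃ z, IsSubgradientAt h z y ∧ t = ‖G y + β • z‖ ^ 2} / (g y + β * h y)}

set_option maxHeartbeats 1000000

/-- stability of the Chatterjee–Łojasiewicz inequality under a subdifferentiable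
perturbation: if `g` is `r`-CL at `x`, then for sufficiently small `β > 0` the function
`f = g + βh` is `εr`-CL at `x` (first with respect to `g`, and genuinely so when the zeros of
`g` in the small ball are zeros of `f`). -/
theorem cl_stability_under_perturbation
    {p : ℕ} (g h : EuclideanSpace ℝ (Fin p) → ℝ)
    (G : EuclideanSpace ℝ (Fin p) → EuclideanSpace ℝ (Fin p))
    (hg_nonneg : ∀ x, 0 ≤ g x) (hh_nonneg : ∀ x, 0 ≤ h x)
    (hgrad : ∀ x, HasGradientAt g (G x) x)
    (hh_sub : ∀ y, ∃ z, IsSubgradientAt h z y)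
    (x : EuclideanSpace ℝ (Fin p)) (r : ℝ) (hr : 0 < r)
    (hCL : 4 * g x < r ^ 2 * chiCL g G x r)
    (ε : ℝ) (hε0 : 0 < ε) (hε1 : ε < 1)
    (r' : ℝ) (hr' : r' = ε * r)
    (hy : ∃ y ∈ closedBall x r', g y ≠ 0)
    (gl gu hu LL : ℝ)
    (hgl : gl = sInf {s | ∃ y ∈ closedBall x r', g y ≠ 0 ∧ s = g y})
    (hgu : gu = sSup (g '' closedBall x r'))
    (hhu : hu = sSup (h '' closedBall x r'))
    (hLL : LL = sSup {s | ∃ y ∈ closedBall x r, ∃ z, IsSubgradientAt h z y ∧ s = ‖z‖})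
    (hbddg : BddAbove (g '' closedBall x r'))
    (hbddh : BddAbove (h '' closedBall x r'))
    (hbddL : BddAbove {s | ∃ y ∈ closedBall x r, ∃ z, IsSubgradientAt h z y ∧ s = ‖z‖})
    (hLpos : 0 < LL) (hhx : 0 < h x)
    (A B Cc D Δ : ℝ)
    (hA : A = 4 * g x * gu) (hB : B = 4 * g x * hu + 4 * h x * gu)
    (hCc : Cc = 4 * h x * hu) (hD : D = (1 / 2) * r' ^ 2 * chiCL g G x r * gl)
    (hΔ : Δ = B ^ 2 - 4 * Cc * (A - D)) :
    0 ≤ Δ ∧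
    ∀ β : ℝ, 0 < β →
      β < min (Real.sqrt (gl * chiCL g G x r) / (4 * LL)) ((Real.sqrt Δ - B) / (2 * Cc)) →
      4 * (g x + β * h x) < r' ^ 2 * chiReg g h G β g x r' ∧
      ((∀ y ∈ closedBall x r', g y = 0 → g y + β * h y = 0) →
        4 * (g x + β * h x) < r' ^ 2 *
          chiReg g h G β (fun y => g y + β * h y) x r') := by
  obtain ⟨y₀, hy₀ball, hy₀ne⟩ := hy
  have hr'pos : 0 < r' := by rw [hr']; positivity
  have hr'le : r' ≤ r := by rw [hr']; nlinarith only [hr, hε0, hε1]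
  have hball : closedBall x r' ⊆ closedBall x r := closedBall_subset_closedBall hr'le
  have hxball : x ∈ closedBall x r' := mem_closedBall_self hr'pos.le
  set χ := chiCL g G x r with hχdef
  have hgy₀ : 0 < g y₀ := (hg_nonneg y₀).lt_of_ne (Ne.symm hy₀ne)
  have hχbdd : BddBelow {s | ∃ y ∈ closedBall x r, g y ≠ 0 ∧ s = ‖G y‖ ^ 2 / g y} := by
    refine ⟨0, ?_⟩
    rintro s ⟨y, _, hgy, rfl⟩
    exact div_nonneg (by positivity) (hg_nonneg y)
  have hχpos : 0 < χ := by nlinarith only [hg_nonneg x, pow_pos hr 2, hCL]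
  have hgl0 : 0 ≤ gl := by
    rw [hgl]
    apply Real.sInf_nonneg
    rintro s ⟨y, _, _, rfl⟩
    exact hg_nonneg y
  have hglbdd : BddBelow {s | ∃ y ∈ closedBall x r', g y ≠ 0 ∧ s = g y} := by
    refine ⟨0, ?_⟩
    rintro s ⟨y, _, _, rfl⟩
    exact hg_nonneg y
  have hgle : ∀ y ∈ closedBall x r', g y ≠ 0 → gl ≤ g y := by
    intro y hyb hgy
    rw [hgl]
    exact csInf_le hglbdd ⟨y, hyb, hgy, rfl⟩
  have hgule : ∀ y ∈ closedBall x r', g y ≤ gu := by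
    intro y hyb
    rw [hgu]; exact le_csSup hbddg ⟨y, hyb, rfl⟩
  have hhule : ∀ y ∈ closedBall x r', h y ≤ hu := by
    intro y hyb
    rw [hhu]; exact le_csSup hbddh ⟨y, hyb, rfl⟩
  have hgupos : 0 < gu := lt_of_lt_of_le hgy₀ (hgule y₀ hy₀ball)
  have hhupos : 0 < hu := lt_of_lt_of_le hhx (hhule x hxball)
  have hCcpos : 0 < Cc := by rw [hCc]; positivity
  have hD0 : 0 ≤ D := by
    rw [hD]
    have : (0:ℝ) ≤ χ := hχpos.le
    positivity
  have hΔ0 : 0 ≤ Δ := by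
    rw [hΔ, hA, hB, hCc]
    nlinarith only [sq_nonneg (4 * g x * hu - 4 * h x * gu),
      mul_nonneg (by positivity : (0:ℝ) ≤ 4 * h x * hu) hD0]
  refine ⟨hΔ0, ?_⟩
  intro β hβpos hβlt
  obtain ⟨hβ1, hβ2⟩ := lt_min_iff.mp hβlt
  have h1 : β * (4 * LL) < Real.sqrt (gl * χ) := by
    rw [lt_div_iff₀ (by positivity)] at hβ1
    exact hβ1
  have hglχpos : 0 < gl * χ := by
    have h0 : 0 < Real.sqrt (gl * χ) := lt_of_le_of_lt (by positivity) h1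
    exact Real.sqrt_pos.mp h0
  have hglpos : 0 < gl := by
    rcases mul_pos_iff.mp hglχpos with ⟨h', _⟩ | ⟨_, h'⟩
    · exact h'
    · linarith
  -- key pointwise lower bound on gradient norms
  have key : ∀ y ∈ closedBall x r', g y ≠ 0 → ∀ z, IsSubgradientAt h z y →
      (1/2) * (χ * gl) ≤ ‖G y + β • z‖ ^ 2 := by
    intro y hyb hgy z hz
    have hgyp : 0 < g y := (hg_nonneg y).lt_of_ne (Ne.symm hgy)
    have hgly : gl ≤ g y := hgle y hyb hgy
    have hχy : χ ≤ ‖G y‖ ^ 2 / g y := csInf_le hχbdd ⟨y, hball hyb, hgy, rfl⟩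
    have hGy2 : χ * g y ≤ ‖G y‖ ^ 2 := (le_div_iff₀ hgyp).mp hχy
    have hGy : Real.sqrt (χ * g y) ≤ ‖G y‖ := by
      rw [show ‖G y‖ = Real.sqrt (‖G y‖ ^ 2) from (Real.sqrt_sq (norm_nonneg _)).symm]
      exact Real.sqrt_le_sqrt hGy2
    have hzL : ‖z‖ ≤ LL := by
      rw [hLL]; exact le_csSup hbddL ⟨y, hball hyb, z, hz, rfl⟩
    have hβz : β * ‖z‖ ≤ β * LL := mul_le_mul_of_nonneg_left hzL hβpos.le
    have h4 : β * LL < Real.sqrt (gl * χ) / 4 := by linarith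
    have hcomm : Real.sqrt (gl * χ) = Real.sqrt (χ * gl) := by rw [mul_comm]
    have hmono : Real.sqrt (χ * gl) ≤ Real.sqrt (χ * g y) :=
      Real.sqrt_le_sqrt (mul_le_mul_of_nonneg_left hgly hχpos.le)
    have htri : ‖G y‖ - ‖β • z‖ ≤ ‖G y + β • z‖ := by
      have := norm_sub_norm_le (G y) (-(β • z))
      simpa [sub_neg_eq_add] using this
    have hns : ‖β • z‖ = β * ‖z‖ := by
      rw [norm_smul, Real.norm_eq_abs, abs_of_pos hβpos]
    have hlow : (3/4) * Real.sqrt (χ * g y) ≤ ‖G y + β • z‖ := by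
      rw [hcomm] at h4
      rw [hns] at htri
      linarith
    have hsq : ((3/4) * Real.sqrt (χ * g y)) ^ 2 ≤ ‖G y + β • z‖ ^ 2 :=
      pow_le_pow_left₀ (by positivity) hlow 2
    have hval : ((3/4) * Real.sqrt (χ * g y)) ^ 2 = (9/16) * (χ * g y) := by
      rw [mul_pow, Real.sq_sqrt (by positivity)]
      ring
    have hχgl : χ * gl ≤ χ * g y := mul_le_mul_of_nonneg_left hgly hχpos.le
    nlinarith only [hsq, hval, hχgl, hglχpos]
  -- lower bound on inner infima
  have hNlb : ∀ y ∈ closedBall x r', g y ≠ 0 →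
      (1/2) * (χ * gl) ≤ sInf {t | ∃ z, IsSubgradientAt h z y ∧ t = ‖G y + β • z‖ ^ 2} := by
    intro y hyb hgy
    obtain ⟨z₀, hz₀⟩ := hh_sub y
    refine le_csInf ⟨‖G y + β • z₀‖ ^ 2, z₀, hz₀, rfl⟩ ?_
    rintro t ⟨z, hz, rfl⟩
    exact key y hyb hgy z hz
  have hdenpos : ∀ y ∈ closedBall x r', g y ≠ 0 → 0 < g y + β * h y := by
    intro y hyb hgy
    have h1' := (hg_nonneg y).lt_of_ne (Ne.symm hgy)
    have h2' := mul_nonneg hβpos.le (hh_nonneg y)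
    linarith only [h1', h2']
  have hdenub : ∀ y ∈ closedBall x r', g y + β * h y ≤ gu + β * hu := by
    intro y hyb
    have h1' := hgule y hyb
    have h2' := mul_le_mul_of_nonneg_left (hhule y hyb) hβpos.le
    linarith only [h1', h2']
  have hgubpos : 0 < gu + β * hu := by positivity
  -- every element of the chiReg-g set is bounded below
  have hlb : ∀ s ∈ {s | ∃ y ∈ closedBall x r', g y ≠ 0 ∧
      s = sInf {t | ∃ z, IsSubgradientAt h z y ∧ t = ‖G y + β • z‖ ^ 2} / (g y + β * h y)},
      (1/2) * (χ * gl) / (gu + β * hu) ≤ s := by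
    rintro s ⟨y, hyb, hgy, rfl⟩
    exact div_le_div₀ (le_trans (by positivity) (hNlb y hyb hgy)) (hNlb y hyb hgy)
      (hdenpos y hyb hgy) (hdenub y hyb)
  have hχreg : (1/2) * (χ * gl) / (gu + β * hu) ≤ chiReg g h G β g x r' := by
    refine le_csInf ⟨sInf {t | ∃ z, IsSubgradientAt h z y₀ ∧ t = ‖G y₀ + β • z‖ ^ 2} / (g y₀ + β * h y₀), y₀, hy₀ball, hy₀ne, rfl⟩ hlb
  -- quadratic estimate
  have h2 : β * (2 * Cc) < Real.sqrt Δ - B := by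
    rw [lt_div_iff₀ (by positivity)] at hβ2
    exact hβ2
  have hB0 : 0 ≤ B := by
    rw [hB]
    have := hg_nonneg x
    positivity
  have hsq2 : (β * (2 * Cc) + B) ^ 2 < Δ := by
    have hpos : 0 ≤ β * (2 * Cc) + B := by positivity
    have hlt : β * (2 * Cc) + B < Real.sqrt Δ := by linarith only [h2]
    nlinarith only [mul_self_lt_mul_self hpos hlt, Real.sq_sqrt hΔ0]
  have hquad : A + B * β + Cc * β ^ 2 < D := by nlinarith only [hsq2, hΔ, hCcpos]
  have hmainlt : 4 * (g x + β * h x) * (gu + β * hu) < r' ^ 2 * ((1/2) * (χ * gl)) := by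
    rw [hA, hB, hCc] at hquad
    rw [hD] at hquad
    nlinarith only [hquad]
  have hmain : 4 * (g x + β * h x) < r' ^ 2 * ((1/2) * (χ * gl) / (gu + β * hu)) := by
    rw [mul_div_assoc', lt_div_iff₀ hgubpos]
    linarith
  have hfirst : 4 * (g x + β * h x) < r' ^ 2 * chiReg g h G β g x r' := by
    have := mul_le_mul_of_nonneg_left hχreg (by positivity : (0:ℝ) ≤ r' ^ 2)
    linarith
  refine ⟨hfirst, ?_⟩
  intro hzero
  have hmono2 : chiReg g h G β g x r' ≤ chiReg g h G β (fun y => g y + β * h y) x r' := by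
    apply csInf_le_csInf
    · exact ⟨_, hlb⟩
    · refine ⟨_, y₀, hy₀ball, ?_, rfl⟩
      exact (hdenpos y₀ hy₀ball hy₀ne).ne'
    · rintro s ⟨y, hyb, hfy, rfl⟩
      refine ⟨y, hyb, fun hg0 => hfy ?_, rfl⟩
      exact hzero y hyb hg0
  have := mul_le_mul_of_nonneg_left hmono2 (by positivity : (0:ℝ) ≤ r' ^ 2)
  linarith
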